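/- Let f: ℝ → ℝ be differentiable and strictly increasing with |f''(z)| ≤ f'(z) for all z in a bounded interval Z. Then for all z₁, z₂ ∈ Z: f'(z₂) e^{−|z₂ − z₁|} ≤ f'(z₁) ≤ f'(z₂) e^{|z₂ − z₁|}. -/

import Mathlib

open Real Set

lemma flip_12 (a b d : ℝ) (h : a ≤ b * Real.exp d) : a * Real.exp (-d) ≤ b := by
  have h2 := mul_le_mul_of_nonneg_right h (Real.exp_pos (-d)).le
  calc a * Real.exp (-d) ≤ b * Real.exp d * Real.exp (-d) := h2
    _ = b := by rw [mul_assoc, ← Real.exp_add]; simp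

lemma aux_12 (f : ℝ → ℝ) (A B : ℝ) (hf : ContDiff ℝ 2 f)
    (hsc : ∀ z ∈ Set.Icc A B, |deriv (deriv f) z| ≤ deriv f z)
    {z w : ℝ} (hz : z ∈ Set.Icc A B) (hw : w ∈ Set.Icc A B) (hzw : z ≤ w) :
    deriv f w ≤ deriv f z * Real.exp (w - z) ∧
    deriv f z ≤ deriv f w * Real.exp (w - z) := by
  have hdf : ContDiff ℝ 1 (deriv f) := by
    have := (contDiff_succ_iff_deriv (n := 1)).mp (by exact_mod_cast hf)
    exact this.2.2
  have hd2 : Differentiable ℝ (deriv f) := hdf.differentiable one_ne_zero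
  have hc : Continuous (deriv f) := hd2.continuous
  -- derivative facts
  have hder1 : ∀ x : ℝ, HasDerivAt (fun t => deriv f t * Real.exp (-t))
      (deriv (deriv f) x * Real.exp (-x) + deriv f x * (Real.exp (-x) * (-1))) x := by
    intro x
    have he : HasDerivAt (fun t : ℝ => Real.exp (-t)) (Real.exp (-x) * (-1)) x :=
      (Real.hasDerivAt_exp (-x)).comp x (hasDerivAt_neg x)
    exact ((hd2 x).hasDerivAt).mul he
  have hder2 : ∀ x : ℝ, HasDerivAt (fun t => deriv f t * Real.exp t)
      (deriv (deriv f) x * Real.exp x + deriv f x * Real.exp x) x := by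
    intro x
    exact ((hd2 x).hasDerivAt).mul (Real.hasDerivAt_exp x)
  have h1 : AntitoneOn (fun t => deriv f t * Real.exp (-t)) (Set.Icc A B) := by
    apply antitoneOn_of_deriv_nonpos (convex_Icc A B)
    · exact (hc.mul (Real.continuous_exp.comp continuous_neg)).continuousOn
    · intro x hx
      exact ((hder1 x).differentiableAt).differentiableWithinAt
    · intro x hx
      rw [(hder1 x).deriv]
      have hx' : x ∈ Set.Icc A B := interior_subset hx
      have := abs_le.mp (hsc x hx')
      nlinarith [Real.exp_pos (-x), this.2]
  have h2 : MonotoneOn (fun t => deriv f t * Real.exp t) (Set.Icc A B) := by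
    apply monotoneOn_of_deriv_nonneg (convex_Icc A B)
    · exact (hc.mul Real.continuous_exp).continuousOn
    · intro x hx
      exact ((hder2 x).differentiableAt).differentiableWithinAt
    · intro x hx
      rw [(hder2 x).deriv]
      have hx' : x ∈ Set.Icc A B := interior_subset hx
      have := abs_le.mp (hsc x hx')
      nlinarith [Real.exp_pos x, this.1]
  constructor
  · have H := h1 hz hw hzw
    simp only at H
    calc deriv f w = (deriv f w * Real.exp (-w)) * Real.exp w := by
          rw [mul_assoc, ← Real.exp_add]; simp
      _ ≤ (deriv f z * Real.exp (-z)) * Real.exp w :=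
          mul_le_mul_of_nonneg_right H (Real.exp_pos w).le
      _ = deriv f z * Real.exp (w - z) := by
          rw [mul_assoc, ← Real.exp_add]; ring_nf
  · have H := h2 hz hw hzw
    simp only at H
    calc deriv f z = (deriv f z * Real.exp z) * Real.exp (-z) := by
          rw [mul_assoc, ← Real.exp_add]; simp
      _ ≤ (deriv f w * Real.exp w) * Real.exp (-z) :=
          mul_le_mul_of_nonneg_right H (Real.exp_pos (-z)).le
      _ = deriv f w * Real.exp (w - z) := by
          rw [mul_assoc, ← Real.exp_add]; ring_nf

theorem stmt_12 (f : ℝ → ℝ) (A B : ℝ) (hf : ContDiff ℝ 2 f) (hmono : StrictMono f)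
    (hsc : ∀ z ∈ Set.Icc A B, |deriv (deriv f) z| ≤ deriv f z)
    (z₁ z₂ : ℝ) (h₁ : z₁ ∈ Set.Icc A B) (h₂ : z₂ ∈ Set.Icc A B) :
    deriv f z₂ * Real.exp (-|z₂ - z₁|) ≤ deriv f z₁ ∧
    deriv f z₁ ≤ deriv f z₂ * Real.exp |z₂ - z₁| := by
  rcases le_total z₁ z₂ with h | h
  · obtain ⟨H1, H2⟩ := aux_12 f A B hf hsc h₁ h₂ h
    rw [abs_of_nonneg (by linarith : (0:ℝ) ≤ z₂ - z₁)]
    exact ⟨flip_12 _ _ _ H1, H2⟩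
  · obtain ⟨H1, H2⟩ := aux_12 f A B hf hsc h₂ h₁ h
    rw [abs_of_nonpos (by linarith : z₂ - z₁ ≤ 0), neg_neg]
    have e1 : z₂ - z₁ = -(z₁ - z₂) := by ring
    rw [e1]
    exact ⟨flip_12 _ _ _ H2, by rw [neg_neg]; exact H1⟩
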